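/- Suppose u₁ is a bounded harmonic function on ℂ̄∖Δ₁ and u₂ is a bounded harmonic function on ℂ̄∖Δ₂, where Δ₁, Δ₂ are disjoint compact real intervals, both regular for the Dirichlet problem, and suppose 2u₁(τ) − u₂(τ) = 0 for τ ∈ Δ₁ and −u₁(τ) + 2u₂(τ) = 0 for τ ∈ Δ₂. Then u₁ ≡ 0 and u₂ ≡ 0. -/

import Mathlib

open Complex Set Metric Filter Topology

noncomputable section

/-- A real-valued function is harmonic on an open subset of `ℂ` iff it is locally
the real part of a holomorphic function. -/
def HarmOn (u : ℂ → ℝ) (s : Set ℂ) : Prop :=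
  ∀ z ∈ s, ∃ ε > 0, ∃ f : ℂ → ℂ,
    (∀ w ∈ Metric.ball z ε, DifferentiableAt ℂ f w) ∧
    (∀ w ∈ Metric.ball z ε, u w = (f w).re)

namespace Statement19Aux

lemma harmOn_neg {u : ℂ → ℝ} {s : Set ℂ} (hu : HarmOn u s) : HarmOn (fun z => -u z) s := by
  intro z hz
  obtain ⟨ε, hε, f, hf, hfu⟩ := hu z hz
  exact ⟨ε, hε, fun w => -f w, fun w hw => (hf w hw).neg,
    fun w hw => by simp [hfu w hw]⟩

lemma harmOn_continuousAt {u : ℂ → ℝ} {s : Set ℂ} (hu : HarmOn u s) {z : ℂ} (hz : z ∈ s) :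
    ContinuousAt u z := by
  obtain ⟨ε, hε, f, hf, hfu⟩ := hu z hz
  have h1 : ContinuousAt (fun w => (f w).re) z :=
    Complex.continuous_re.continuousAt.comp (hf z (mem_ball_self hε)).continuousAt
  apply h1.congr
  filter_upwards [ball_mem_nhds z hε] with w hw using (hfu w hw).symm

/-- Local strong maximum principle for harmonic functions. -/
lemma harm_eventually_eq_of_isLocalMax {u : ℂ → ℝ} {s : Set ℂ} (hu : HarmOn u s) {z : ℂ}
    (hz : z ∈ s) (hmax : IsLocalMax u z) : ∀ᶠ w in 𝓝 z, u w = u z := by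
  obtain ⟨ε, hε, f, hf, hfu⟩ := hu z hz
  set g : ℂ → ℂ := fun w => Complex.exp (f w) with hg
  have hgd : ∀ᶠ w in 𝓝 z, DifferentiableAt ℂ g w := by
    filter_upwards [ball_mem_nhds z hε] with w hw using (hf w hw).cexp
  have hnorm : ∀ w ∈ Metric.ball z ε, ‖g w‖ = Real.exp (u w) := by
    intro w hw
    simp [hg, Complex.norm_exp, hfu w hw]
  have hmax' : IsLocalMax (norm ∘ g) z := by
    filter_upwards [hmax, ball_mem_nhds z hε] with w hw hwball
    simp only [Function.comp_apply, hnorm w hwball, hnorm z (mem_ball_self hε)]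
    exact Real.exp_le_exp.2 hw
  have hev := Complex.eventually_eq_of_isLocalMax_norm hgd hmax'
  filter_upwards [hev, ball_mem_nhds z hε] with w hw hwball
  have : Real.exp (u w) = Real.exp (u z) := by
    rw [← hnorm w hwball, ← hnorm z (mem_ball_self hε), hw]
  exact Real.exp_eq_exp.mp this

/-- Strong maximum principle: a harmonic function attaining its max over an open set `U`
at `z₀ ∈ U` is constant on the connected component of `z₀` in `U`. -/
lemma harm_eqOn_component {u : ℂ → ℝ} {U : Set ℂ} (hU : IsOpen U) (hu : HarmOn u U)
    {z₀ : ℂ} (hz₀ : z₀ ∈ U) (hmax : ∀ x ∈ U, u x ≤ u z₀) :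
    ∀ z ∈ connectedComponentIn U z₀, u z = u z₀ := by
  set C := connectedComponentIn U z₀ with hC
  have hCU : C ⊆ U := connectedComponentIn_subset U z₀
  have hCop : IsOpen C := hU.connectedComponentIn
  set A : Set ℂ := {z | z ∈ C ∧ u z = u z₀} with hA
  set B : Set ℂ := {z | z ∈ C ∧ u z ≠ u z₀} with hB
  have hAop : IsOpen A := by
    rw [isOpen_iff_mem_nhds]
    rintro a ⟨haC, hau⟩
    have hloc : IsLocalMax u a := by
      filter_upwards [hU.mem_nhds (hCU haC)] with w hw
      calc u w ≤ u z₀ := hmax w hw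
        _ = u a := hau.symm
    filter_upwards [harm_eventually_eq_of_isLocalMax hu (hCU haC) hloc, hCop.mem_nhds haC]
      with w hw hwC
    exact ⟨hwC, hw.trans hau⟩
  have hBop : IsOpen B := by
    rw [isOpen_iff_mem_nhds]
    rintro b ⟨hbC, hbu⟩
    have : ∀ᶠ w in 𝓝 b, u w ≠ u z₀ := (harmOn_continuousAt hu (hCU hbC)).eventually_ne hbu
    filter_upwards [this, hCop.mem_nhds hbC] with w hw hwC using ⟨hwC, hw⟩
  have hdisj : Disjoint A B := by
    rw [Set.disjoint_left]
    rintro x ⟨_, hx⟩ ⟨_, hx'⟩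
    exact hx' hx
  have hsub : C ⊆ A ∪ B := by
    intro x hx
    by_cases h : u x = u z₀
    · exact Or.inl ⟨hx, h⟩
    · exact Or.inr ⟨hx, h⟩
  have hnon : (C ∩ A).Nonempty :=
    ⟨z₀, mem_connectedComponentIn hz₀, mem_connectedComponentIn hz₀, rfl⟩
  have := (isPreconnected_connectedComponentIn (x := z₀) (F := U)).subset_left_of_subset_union
    hAop hBop hdisj hsub hnon
  intro z hz
  exact (this hz).2

/-- The frontier of a connected component of an open set avoids the set. -/
lemma frontier_componentIn_disjoint {U : Set ℂ} (hU : IsOpen U) {z₀ : ℂ} (hz₀ : z₀ ∈ U) :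
    ∀ x ∈ frontier (connectedComponentIn U z₀), x ∉ U := by
  intro x hx hxU
  set C := connectedComponentIn U z₀ with hC
  have hCop : IsOpen C := hU.connectedComponentIn
  have hxcl : x ∈ closure C := hx.1
  have hxnC : x ∉ C := by
    intro h
    exact hx.2 (by rwa [hCop.interior_eq])
  set D := connectedComponentIn U x with hD
  have hDop : IsOpen D := hU.connectedComponentIn
  have hxD : x ∈ D := mem_connectedComponentIn hxU
  obtain ⟨y, hyD, hyC⟩ := mem_closure_iff.mp hxcl D hDop hxD
  have hunion : IsPreconnected (D ∪ C) :=
    IsPreconnected.union y hyD hyC isPreconnected_connectedComponentIn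
      isPreconnected_connectedComponentIn
  have hsubU : D ∪ C ⊆ U :=
    union_subset (connectedComponentIn_subset U x) (connectedComponentIn_subset U z₀)
  have : D ∪ C ⊆ C :=
    hunion.subset_connectedComponentIn (Or.inr (mem_connectedComponentIn hz₀)) hsubU
  exact hxnC (this (Or.inl hxD))

lemma frontier_componentIn_nonempty {U : Set ℂ} {z₀ : ℂ} (hz₀ : z₀ ∈ U)
    (hne : Uᶜ.Nonempty) : (frontier (connectedComponentIn U z₀)).Nonempty := by
  by_contra h
  rw [Set.not_nonempty_iff_eq_empty] at h
  have hclopen : IsClopen (connectedComponentIn U z₀) := isClopen_iff_frontier_eq_empty.mpr h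
  rcases isClopen_iff.mp hclopen with h1 | h1
  · have : z₀ ∈ connectedComponentIn U z₀ := mem_connectedComponentIn hz₀
    rw [h1] at this; exact this
  · obtain ⟨w, hw⟩ := hne
    exact hw ((connectedComponentIn_subset U z₀) (h1 ▸ Set.mem_univ w))

/-- Weak maximum principle on a bounded open set. -/
lemma weakMP {u : ℂ → ℝ} {U : Set ℂ} (hUo : IsOpen U) (hUb : Bornology.IsBounded U)
    (hu : HarmOn u U) (hc : ContinuousOn u (closure U)) {C : ℝ}
    (hb : ∀ x ∈ frontier U, u x ≤ C) : ∀ z ∈ U, u z ≤ C := by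
  rcases Set.eq_empty_or_nonempty U with rfl | hne
  · simp
  have hcomp : IsCompact (closure U) := hUb.isCompact_closure
  obtain ⟨z₀, hz₀mem, hz₀max⟩ := hcomp.exists_isMaxOn hne.closure hc
  have hz₀max' : ∀ x ∈ closure U, u x ≤ u z₀ := fun x hx => hz₀max hx
  suffices h : u z₀ ≤ C by
    intro z hz; exact le_trans (hz₀max' z (subset_closure hz)) h
  by_cases hzU : z₀ ∈ U
  · -- interior max: use strong MP on the component
    have hmaxU : ∀ x ∈ U, u x ≤ u z₀ := fun x hx => hz₀max' x (subset_closure hx)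
    have heq := harm_eqOn_component hUo hu hzU hmaxU
    set Cc := connectedComponentIn U z₀ with hCc
    have hUne : Uᶜ.Nonempty := by
      obtain ⟨r, hrpos, hr⟩ := hUb.subset_ball_lt 0 0
      refine ⟨((r + 1 : ℝ) : ℂ), fun hmem => ?_⟩
      have h3 := hr hmem
      rw [mem_ball, Complex.dist_eq, sub_zero] at h3
      rw [Complex.norm_real, Real.norm_eq_abs, abs_of_pos (by positivity)] at h3
      linarith
    obtain ⟨x, hx⟩ := frontier_componentIn_nonempty hzU hUne
    have hxnU : x ∉ U := frontier_componentIn_disjoint hUo hzU x hx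
    have hxclU : x ∈ closure U := closure_mono (connectedComponentIn_subset U z₀) hx.1
    have hxfr : x ∈ frontier U := ⟨hxclU, by rwa [hUo.interior_eq]⟩
    -- u x = u z₀ by continuity
    have hxval : u x = u z₀ := by
      have hclosed : IsClosed (closure U ∩ u ⁻¹' {u z₀}) :=
        hc.preimage_isClosed_of_isClosed isClosed_closure (isClosed_singleton (x := u z₀))
      have hsub1 : Cc ⊆ closure U ∩ u ⁻¹' {u z₀} := fun y hy =>
        ⟨subset_closure (connectedComponentIn_subset U z₀ hy), heq y hy⟩
      have := closure_minimal hsub1 hclosed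
      exact (this hx.1).2
    rw [← hxval]
    exact hb x hxfr
  · have : z₀ ∈ frontier U := ⟨hz₀mem, by rwa [hUo.interior_eq]⟩
    exact hb z₀ this

/-- `Real.log ‖· - q‖` perturbation stays harmonic. -/
lemma harmOn_sub_log {u : ℂ → ℝ} {s : Set ℂ} (hu : HarmOn u s) (ε : ℝ) (q : ℂ) :
    HarmOn (fun z => u z - ε * Real.log (dist z q)) (s ∩ {q}ᶜ) := by
  rintro z ⟨hzs, hzq⟩
  have hzq' : z ≠ q := hzq
  have hd : (0 : ℝ) < dist z q := dist_pos.mpr hzq'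
  obtain ⟨ε₁, hε₁, f, hf, hfu⟩ := hu z hzs
  refine ⟨min ε₁ (dist z q), lt_min hε₁ hd,
    fun w => f w - (ε : ℂ) * (Complex.log ((w - q) / (z - q)) + (Real.log (dist z q) : ℂ)),
    ?_, ?_⟩
  · intro w hw
    have hw1 : w ∈ Metric.ball z ε₁ := Metric.ball_subset_ball (min_le_left _ _) hw
    have hwz : dist w z < dist z q := lt_of_lt_of_le (mem_ball.mp hw) (min_le_right _ _)
    have hzq0 : z - q ≠ 0 := sub_ne_zero.mpr hzq'
    have hslit : (w - q) / (z - q) ∈ Complex.slitPlane := by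
      left
      have hkey : ‖(w - q) / (z - q) - 1‖ < 1 := by
        have : (w - q) / (z - q) - 1 = (w - z) / (z - q) := by
          field_simp
          ring
        rw [this, norm_div]
        rw [div_lt_one (norm_pos_iff.mpr hzq0)]
        simpa [Complex.dist_eq] using hwz
      have hre := Complex.abs_re_le_norm ((w - q) / (z - q) - 1)
      have : |((w - q) / (z - q)).re - 1| < 1 := by
        simpa using lt_of_le_of_lt hre hkey
      have := abs_lt.mp this
      linarith [this.1]
    have hdiff : DifferentiableAt ℂ (fun w => (w - q) / (z - q)) w := by
      apply DifferentiableAt.div_const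
      exact (differentiableAt_id.sub (differentiableAt_const q))
    exact ((hf w hw1).sub (((hdiff.clog hslit).add (differentiableAt_const _)).const_mul _))
  · intro w hw
    have hw1 : w ∈ Metric.ball z ε₁ := Metric.ball_subset_ball (min_le_left _ _) hw
    have hwz : dist w z < dist z q := lt_of_lt_of_le (mem_ball.mp hw) (min_le_right _ _)
    have hwq : (0 : ℝ) < dist w q := by
      have := dist_triangle z w q
      have h2 : dist z q - dist w z ≤ dist w q := by
        rw [dist_comm w z] at *
        linarith [dist_triangle z w q]
      linarith
    have hzq0 : z - q ≠ 0 := sub_ne_zero.mpr hzq'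
    have hwq0 : w - q ≠ 0 := sub_ne_zero.mpr (dist_pos.mp hwq)
    have hrelog : (Complex.log ((w - q) / (z - q))).re
        = Real.log (dist w q) - Real.log (dist z q) := by
      rw [Complex.log_re, norm_div]
      rw [Real.log_div (norm_ne_zero_iff.mpr hwq0) (norm_ne_zero_iff.mpr hzq0)]
      simp [Complex.dist_eq]
    have : (((ε : ℂ) * (Complex.log ((w - q) / (z - q)) + (Real.log (dist z q) : ℂ)))).re
        = ε * Real.log (dist w q) := by
      rw [Complex.mul_re]
      simp only [Complex.ofReal_re, Complex.ofReal_im, zero_mul, sub_zero, Complex.add_re,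
        Complex.ofReal_re]
      rw [hrelog]; ring
    simp only [Complex.sub_re, this, hfu w hw1]

set_option maxHeartbeats 1000000 in
/-- Exterior Phragmén–Lindelöf estimate: a bounded harmonic function outside a compact set
contained in `ball q r₁` is bounded outside by its sup on the sphere of radius `r₁`. -/
lemma exterior_bound {u : ℂ → ℝ} {K : Set ℂ}
    (hu : HarmOn u Kᶜ) (hcont : Continuous u) {M : ℝ} (hM : ∀ z, |u z| ≤ M)
    {q : ℂ} {r₁ : ℝ} (hr₁ : 0 < r₁) (hKr : K ⊆ Metric.ball q r₁) {t : ℝ}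
    (ht : ∀ x ∈ Metric.sphere q r₁, u x ≤ t) :
    ∀ z : ℂ, r₁ ≤ dist z q → u z ≤ t := by
  intro z hz
  rcases eq_or_lt_of_le hz with heq | hlt
  · exact ht z (by simpa [mem_sphere, Complex.dist_eq] using heq.symm)
  -- main case : r₁ < dist z q
  have hkey : ∀ ε > (0:ℝ), u z ≤ t + ε * (Real.log (dist z q) - Real.log r₁) := by
    intro ε hε
    set R : ℝ := max (dist z q + 1) (r₁ * Real.exp ((M - t) / ε)) with hR
    have hRz : dist z q < R := lt_of_lt_of_le (by linarith) (le_max_left _ _)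
    have hRr : r₁ < R := lt_trans hlt hRz
    have hRlog : M - t ≤ ε * (Real.log R - Real.log r₁) := by
      have hR0 : r₁ * Real.exp ((M - t) / ε) ≤ R := le_max_right _ _
      have hlog : (M - t) / ε ≤ Real.log R - Real.log r₁ := by
        have h1 : Real.log (r₁ * Real.exp ((M - t) / ε)) ≤ Real.log R :=
          Real.log_le_log (by positivity) hR0
        rw [Real.log_mul (ne_of_gt hr₁) (Real.exp_ne_zero _), Real.log_exp] at h1
        linarith
      calc M - t = ε * ((M - t) / ε) := by field_simp
        _ ≤ ε * (Real.log R - Real.log r₁) := by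
            exact mul_le_mul_of_nonneg_left hlog (le_of_lt hε)
    set U : Set ℂ := {w | r₁ < dist w q} ∩ {w | dist w q < R} with hUdef
    have hUo : IsOpen U := by
      apply IsOpen.inter
      · exact isOpen_lt continuous_const (continuous_id.dist continuous_const)
      · exact isOpen_lt (continuous_id.dist continuous_const) continuous_const
    have hUb : Bornology.IsBounded U := by
      apply Bornology.IsBounded.subset (Metric.isBounded_ball (x := q) (r := R))
      intro w hw; exact mem_ball.mpr hw.2
    set v : ℂ → ℝ := fun w => u w - ε * Real.log (dist w q) with hv
    have hUsub : U ⊆ Kᶜ ∩ {q}ᶜ := by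
      rintro w ⟨hw1, _⟩
      constructor
      · intro hwK
        have := hKr hwK
        rw [mem_ball] at this
        exact absurd this (not_lt.mpr (le_of_lt hw1))
      · intro hwq
        simp only [Set.mem_singleton_iff] at hwq
        rw [hwq] at hw1; simp at hw1
        exact absurd hw1 (not_lt.mpr (le_of_lt hr₁))
    have hvharm : HarmOn v U := by
      intro w hw
      exact harmOn_sub_log hu ε q w (hUsub hw)
    have hclsub : closure U ⊆ {w | r₁ ≤ dist w q} ∩ {w | dist w q ≤ R} := by
      apply closure_minimal
      · rintro w ⟨hw1, hw2⟩
        exact ⟨show r₁ ≤ dist w q from le_of_lt hw1, show dist w q ≤ R from le_of_lt hw2⟩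
      · apply IsClosed.inter
        · exact isClosed_le continuous_const (continuous_id.dist continuous_const)
        · exact isClosed_le (continuous_id.dist continuous_const) continuous_const
    have hlogc : ContinuousOn (fun w : ℂ => Real.log (dist w q)) (closure U) := by
      apply ContinuousOn.log
      · exact (continuous_id.dist continuous_const).continuousOn
      · intro w hw
        exact ne_of_gt (lt_of_lt_of_le hr₁ (hclsub hw).1)
    have hvcont : ContinuousOn v (closure U) :=
      (hcont.continuousOn).sub (continuousOn_const.mul hlogc)
    have hfr : ∀ x ∈ frontier U, v x ≤ t - ε * Real.log r₁ := by
      intro x hxfr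
      have hxcl : x ∈ closure U := hxfr.1
      have hxnU : x ∉ U := fun hxU => hxfr.2 (by rwa [hUo.interior_eq])
      have hxb1 : r₁ ≤ dist x q := (hclsub hxcl).1
      have hxb2 : dist x q ≤ R := (hclsub hxcl).2
      have hcases : dist x q = r₁ ∨ dist x q = R := by
        rcases lt_or_eq_of_le hxb1 with h1 | h1
        · rcases lt_or_eq_of_le hxb2 with h2 | h2
          · exact absurd (show x ∈ U from ⟨h1, h2⟩) hxnU
          · exact Or.inr h2
        · exact Or.inl h1.symm
      show u x - ε * Real.log (dist x q) ≤ t - ε * Real.log r₁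
      rcases hcases with h | h
      · rw [h]
        have : u x ≤ t := ht x (by simpa [mem_sphere, Complex.dist_eq] using h)
        linarith
      · rw [h]
        have h1 : u x ≤ M := le_trans (le_abs_self _) (hM x)
        linarith
    have hzU : z ∈ U := ⟨hlt, hRz⟩
    have h6 : u z - ε * Real.log (dist z q) ≤ t - ε * Real.log r₁ :=
      weakMP hUo hUb hvharm hvcont hfr z hzU
    linarith
  -- let ε → 0
  by_contra hcon
  push_neg at hcon
  set c : ℝ := Real.log (dist z q) - Real.log r₁ with hc
  have hc0 : 0 ≤ c := by
    have := Real.log_le_log hr₁ (le_of_lt hlt)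
    linarith
  set ε : ℝ := (u z - t) / (c + 1) with hεdef
  have hε : 0 < ε := by
    apply div_pos (by linarith) (by linarith)
  have := hkey ε hε
  have h2 : ε * c < ε * (c + 1) := by nlinarith
  have h3 : ε * (c + 1) = u z - t := by
    rw [hεdef]; field_simp
  linarith

/-- Global maximum principle: `u ≤ N` everywhere given `u ≤ N` on the compact set `K`. -/
lemma global_bound {u : ℂ → ℝ} {K : Set ℂ} (hK : IsCompact K) (hKne : K.Nonempty)
    (hu : HarmOn u Kᶜ) (hcont : Continuous u) {M N : ℝ} (hM : ∀ z, |u z| ≤ M)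
    (hN : ∀ x ∈ K, u x ≤ N) : ∀ z : ℂ, u z ≤ N := by
  obtain ⟨r₁, hr₁pos, hKr⟩ := hK.isBounded.subset_ball_lt 0 0
  -- max over the closed ball
  have hLcomp : IsCompact (Metric.closedBall (0:ℂ) r₁) := isCompact_closedBall _ _
  obtain ⟨z₀, hz₀mem, hz₀max⟩ := hLcomp.exists_isMaxOn
    ⟨0, mem_closedBall_self (le_of_lt hr₁pos)⟩ hcont.continuousOn
  have hz₀max' : ∀ x ∈ Metric.closedBall (0:ℂ) r₁, u x ≤ u z₀ := fun x hx => hz₀max hx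
  have hsphere : ∀ x ∈ Metric.sphere (0:ℂ) r₁, u x ≤ u z₀ := fun x hx =>
    hz₀max' x (sphere_subset_closedBall hx)
  have hext := exterior_bound hu hcont hM hr₁pos hKr hsphere
  have hglobal : ∀ z : ℂ, u z ≤ u z₀ := by
    intro z
    rcases le_or_gt (dist z 0) r₁ with h | h
    · exact hz₀max' z (mem_closedBall.mpr h)
    · exact hext z (le_of_lt h)
  suffices h : u z₀ ≤ N by intro z; exact le_trans (hglobal z) h
  by_cases hz₀K : z₀ ∈ K
  · exact hN z₀ hz₀K
  · -- strong MP on the component of Kᶜ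
    have hKo : IsOpen Kᶜ := hK.isClosed.isOpen_compl
    have hmaxU : ∀ x ∈ Kᶜ, u x ≤ u z₀ := fun x _ => hglobal x
    have heq := harm_eqOn_component hKo hu hz₀K hmaxU
    have hUne : (Kᶜ)ᶜ.Nonempty := by rwa [compl_compl]
    obtain ⟨x, hx⟩ := frontier_componentIn_nonempty (hz₀ := hz₀K) hUne
    have hxnU : x ∉ Kᶜ := frontier_componentIn_disjoint hKo hz₀K x hx
    have hxK : x ∈ K := by rwa [Set.notMem_compl_iff] at hxnU
    have hxval : u x = u z₀ := by
      have hclosed : IsClosed (u ⁻¹' {u z₀}) := (isClosed_singleton).preimage hcont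
      have hsub1 : connectedComponentIn Kᶜ z₀ ⊆ u ⁻¹' {u z₀} := fun y hy => heq y hy
      have := closure_minimal hsub1 hclosed
      exact this hx.1
    rw [← hxval]
    exact hN x hxK

/-- Two-sided global bound. -/
lemma global_abs_bound {u : ℂ → ℝ} {K : Set ℂ} (hK : IsCompact K) (hKne : K.Nonempty)
    (hu : HarmOn u Kᶜ) (hcont : Continuous u) {M N : ℝ} (hM : ∀ z, |u z| ≤ M)
    (hN : ∀ x ∈ K, |u x| ≤ N) : ∀ z : ℂ, |u z| ≤ N := by
  have h1 : ∀ z : ℂ, u z ≤ N :=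
    global_bound hK hKne hu hcont hM (fun x hx => le_trans (le_abs_self _) (hN x hx))
  have h2 : ∀ z : ℂ, -u z ≤ N := by
    apply global_bound hK hKne (harmOn_neg hu) hcont.neg (M := M)
      (fun z => by simpa using hM z)
    intro x hx
    calc -u x ≤ |u x| := neg_le_abs _
      _ ≤ N := hN x hx
  intro z
  rw [abs_le]
  exact ⟨by linarith [h2 z], h1 z⟩

end Statement19Aux

open Statement19Aux in
/-- if `u₁` is bounded and harmonic on `ℂ̄∖Δ₁`, `u₂` is bounded and
harmonic on `ℂ̄∖Δ₂` (`Δ₁, Δ₂` disjoint nondegenerate compact real intervals,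
hence regular for the Dirichlet problem), both continuous up to the cuts, and
`2u₁ - u₂ = 0` on `Δ₁` and `-u₁ + 2u₂ = 0` on `Δ₂`, then `u₁ ≡ 0` and `u₂ ≡ 0`. -/
theorem statement19 (c₁ d₁ c₂ d₂ : ℝ) (h₁ : c₁ < d₁) (h₂ : c₂ < d₂)
    (hdisj : Disjoint (Set.Icc c₁ d₁) (Set.Icc c₂ d₂))
    (u₁ u₂ : ℂ → ℝ)
    (hu₁harm : HarmOn u₁ ((fun t : ℝ => (t : ℂ)) '' Set.Icc c₁ d₁)ᶜ)
    (hu₂harm : HarmOn u₂ ((fun t : ℝ => (t : ℂ)) '' Set.Icc c₂ d₂)ᶜ)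
    (hu₁cont : Continuous u₁) (hu₂cont : Continuous u₂)
    (hu₁bdd : ∃ M : ℝ, ∀ z : ℂ, |u₁ z| ≤ M)
    (hu₂bdd : ∃ M : ℝ, ∀ z : ℂ, |u₂ z| ≤ M)
    (hb₁ : ∀ x ∈ Set.Icc c₁ d₁, 2 * u₁ (x : ℂ) - u₂ (x : ℂ) = 0)
    (hb₂ : ∀ x ∈ Set.Icc c₂ d₂, -u₁ (x : ℂ) + 2 * u₂ (x : ℂ) = 0) :
    ∀ z : ℂ, u₁ z = 0 ∧ u₂ z = 0 := by
  obtain ⟨M₁, hM₁⟩ := hu₁bdd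
  obtain ⟨M₂, hM₂⟩ := hu₂bdd
  set K₁ : Set ℂ := (fun t : ℝ => (t : ℂ)) '' Set.Icc c₁ d₁ with hK₁
  set K₂ : Set ℂ := (fun t : ℝ => (t : ℂ)) '' Set.Icc c₂ d₂ with hK₂
  have hK₁c : IsCompact K₁ := (isCompact_Icc).image Complex.continuous_ofReal
  have hK₂c : IsCompact K₂ := (isCompact_Icc).image Complex.continuous_ofReal
  have hK₁ne : K₁.Nonempty := ⟨(c₁ : ℂ), ⟨c₁, ⟨le_refl _, le_of_lt h₁⟩, rfl⟩⟩
  have hK₂ne : K₂.Nonempty := ⟨(c₂ : ℂ), ⟨c₂, ⟨le_refl _, le_of_lt h₂⟩, rfl⟩⟩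
  -- max of |u₁| on K₁ and |u₂| on K₂
  obtain ⟨p₁, hp₁mem, hp₁max⟩ := hK₁c.exists_isMaxOn hK₁ne
    ((continuous_abs.comp hu₁cont).continuousOn)
  obtain ⟨p₂, hp₂mem, hp₂max⟩ := hK₂c.exists_isMaxOn hK₂ne
    ((continuous_abs.comp hu₂cont).continuousOn)
  set N₁ : ℝ := |u₁ p₁| with hN₁
  set N₂ : ℝ := |u₂ p₂| with hN₂
  have hN₁bd : ∀ x ∈ K₁, |u₁ x| ≤ N₁ := fun x hx => hp₁max hx
  have hN₂bd : ∀ x ∈ K₂, |u₂ x| ≤ N₂ := fun x hx => hp₂max hx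
  have hglob₁ : ∀ z : ℂ, |u₁ z| ≤ N₁ :=
    global_abs_bound hK₁c hK₁ne hu₁harm hu₁cont hM₁ hN₁bd
  have hglob₂ : ∀ z : ℂ, |u₂ z| ≤ N₂ :=
    global_abs_bound hK₂c hK₂ne hu₂harm hu₂cont hM₂ hN₂bd
  -- the 2x2 system
  obtain ⟨x₁, hx₁mem, hx₁eq⟩ := hp₁mem
  obtain ⟨x₂, hx₂mem, hx₂eq⟩ := hp₂mem
  have hx₁eq' : (x₁ : ℂ) = p₁ := hx₁eq
  have hx₂eq' : (x₂ : ℂ) = p₂ := hx₂eq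
  have heq₁ : 2 * u₁ p₁ = u₂ p₁ := by
    have := hb₁ x₁ hx₁mem
    rw [hx₁eq'] at this
    linarith
  have heq₂ : 2 * u₂ p₂ = u₁ p₂ := by
    have := hb₂ x₂ hx₂mem
    rw [hx₂eq'] at this
    linarith
  have hN₁le : 2 * N₁ ≤ N₂ := by
    have h2 : |u₂ p₁| = 2 * |u₁ p₁| := by
      rw [← heq₁, abs_mul]
      norm_num
    have h3 := hglob₂ p₁
    rw [h2] at h3
    exact h3
  have hN₂le : 2 * N₂ ≤ N₁ := by
    have h2 : |u₁ p₂| = 2 * |u₂ p₂| := by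
      rw [← heq₂, abs_mul]
      norm_num
    have h3 := hglob₁ p₂
    rw [h2] at h3
    exact h3
  have hN₁0 : 0 ≤ N₁ := abs_nonneg _
  have hN₂0 : 0 ≤ N₂ := abs_nonneg _
  have hN₁z : N₁ = 0 := by linarith
  have hN₂z : N₂ = 0 := by linarith
  intro z
  constructor
  · have := hglob₁ z; rw [hN₁z] at this; exact abs_nonpos_iff.mp this
  · have := hglob₂ z; rw [hN₂z] at this; exact abs_nonpos_iff.mp this

end
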